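/- Let A₁ = [[e^{iφ}, e^{iφ}−1],[0, 1]] and A₂ = [[e^{iψ}, 0],[0, 1]] where neither e^{iφ} nor e^{iψ} is a root of unity. Then there exists M ≥ 1 such that for every α ∈ ℂ there exist integers n, m with 1 ≤ n, m ≤ M such that the first coordinate β of the vector A₁^n A₂^m (α, 1)ᵀ satisfies |β| ≥ |α| + 1 (where the second coordinate remains 1). -/

import Mathlib

open Complex

namespace Stmt13Aux

lemma coe_pow (z : Circle) (n : ℕ) : ((z ^ n : Circle) : ℂ) = (z : ℂ) ^ n := by
  induction n with
  | zero => simp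
  | succ n ih => rw [pow_succ, pow_succ, Circle.coe_mul, ih]

lemma exp_nsmul (x : ℝ) (n : ℕ) : Circle.exp (n * x) = Circle.exp x ^ n := by
  induction n with
  | zero => simp
  | succ n ih => push_cast; rw [add_mul, one_mul, Circle.exp_add, ih, pow_succ]

lemma exp_zsmul (x : ℝ) (k : ℤ) : Circle.exp ((k : ℝ) * x) = Circle.exp x ^ k := by
  obtain ⟨n, rfl | rfl⟩ := Int.eq_nat_or_neg k
  · rw [zpow_natCast, ← exp_nsmul]; norm_num
  · rw [zpow_neg, zpow_natCast, ← exp_nsmul, ← Circle.exp_neg]; push_cast; ring_nf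

lemma dense_zpow (φ : ℝ) (h : ∀ k : ℕ, 0 < k → Circle.exp φ ^ k ≠ 1) :
    DenseRange ((Circle.exp φ) ^ · : ℤ → Circle) := by
  set z := Circle.exp φ with hz
  set S : AddSubgroup ℝ := AddSubgroup.closure {φ, 2 * Real.pi} with hS
  rcases S.dense_or_cyclic with hd | ⟨a, ha⟩
  · -- dense case
    have hsurj : Function.Surjective Circle.exp := fun w => ⟨Complex.arg w, Circle.exp_arg w⟩
    have himg : Dense (Circle.exp '' (S : Set ℝ)) :=
      hsurj.denseRange.dense_image Circle.exp.continuous hd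
    have hsub : Circle.exp '' (S : Set ℝ) ⊆ Set.range (z ^ · : ℤ → Circle) := by
      rintro w ⟨x, hx, rfl⟩
      have : x ∈ S := hx
      rw [hS] at this
      refine AddSubgroup.closure_induction ?_ ?_ ?_ ?_ this
      · rintro y (rfl | rfl)
        · exact ⟨1, by simp [hz]⟩
        · exact ⟨0, by simp [Circle.exp_two_pi]⟩
      · exact ⟨0, by simp⟩
      · rintro x y - - ⟨m, hm⟩ ⟨k, hk⟩
        refine ⟨m + k, ?_⟩
        show z ^ (m + k) = Circle.exp (x + y)
        simp only at hm hk
        rw [zpow_add, hm, hk, Circle.exp_add]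
      · rintro x - ⟨m, hm⟩
        refine ⟨-m, ?_⟩
        show z ^ (-m) = Circle.exp (-x)
        simp only at hm
        rw [zpow_neg, hm, Circle.exp_neg]
    exact fun w => (himg.mono hsub) w
  · -- cyclic case: contradiction
    exfalso
    have hφS : φ ∈ S := AddSubgroup.subset_closure (by simp)
    have hπS : (2 * Real.pi) ∈ S := AddSubgroup.subset_closure (by simp)
    rw [ha, ← AddSubgroup.zmultiples_eq_closure] at hφS hπS
    obtain ⟨m, hm⟩ := AddSubgroup.mem_zmultiples_iff.mp hφS
    obtain ⟨k, hk⟩ := AddSubgroup.mem_zmultiples_iff.mp hπS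
    have hk0 : k ≠ 0 := by
      rintro rfl
      simp only [zero_smul] at hk
      have := Real.pi_ne_zero
      nlinarith [Real.pi_pos]
    have hkφ : (k : ℝ) * φ = (m : ℝ) * (2 * Real.pi) := by
      have : k • φ = m • (k • a) := by rw [← hm, smul_comm]
      rw [hk] at this
      simpa [zsmul_eq_mul] using this
    have hzk : z ^ k = 1 := by
      rw [hz, ← exp_zsmul, hkφ, Circle.exp_int_mul_two_pi]
    have hnat : z ^ k.natAbs = 1 := by
      rcases Int.natAbs_eq k with he | he
      · rw [← zpow_natCast, ← he, hzk]
      · have : z ^ (-(k.natAbs : ℤ)) = 1 := by rw [← he, hzk]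
        rw [zpow_neg, inv_eq_one, zpow_natCast] at this
        exact this
    exact h k.natAbs (Int.natAbs_pos.mpr hk0) hnat

lemma uniform (φ : ℝ) (h : ∀ k : ℕ, 0 < k → Circle.exp φ ^ k ≠ 1) {ε : ℝ} (hε : 0 < ε) :
    ∃ M : ℕ, 1 ≤ M ∧ ∀ w : Circle, ∃ n : ℕ, 1 ≤ n ∧ n ≤ M ∧
      dist w (Circle.exp φ ^ n) < ε := by
  set z := Circle.exp φ
  have hd : DenseRange (z ^ · : ℕ → Circle) := denseRange_zpow_iff_pow.mp (dense_zpow φ h)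
  have hd' : DenseRange (fun n : ℕ => z ^ (n + 1)) := by
    have : DenseRange ((z * ·) ∘ (z ^ · : ℕ → Circle)) :=
      DenseRange.comp ((Homeomorph.mulLeft z).surjective.denseRange) hd
        (Homeomorph.mulLeft z).continuous
    simpa [Function.comp_def, ← pow_succ'] using this
  have hcover : Set.univ ⊆ ⋃ n : ℕ, Metric.ball (z ^ (n + 1)) ε := by
    intro w _
    obtain ⟨n, hn⟩ := hd'.exists_dist_lt w hε
    exact Set.mem_iUnion.mpr ⟨n, by simpa [Metric.mem_ball, dist_comm] using hn⟩
  obtain ⟨t, ht⟩ := isCompact_univ.elim_finite_subcover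
    (fun n : ℕ => Metric.ball (z ^ (n + 1)) ε) (fun n => Metric.isOpen_ball) hcover
  refine ⟨t.sup id + 1, le_add_self, fun w => ?_⟩
  obtain ⟨n, hnt, hn⟩ := Set.mem_iUnion₂.mp (ht (Set.mem_univ w))
  exact ⟨n + 1, Nat.le_add_left 1 n, by
    have := Finset.le_sup (f := id) hnt; simp only [id] at this; omega,
    by simpa [Metric.mem_ball] using hn⟩



lemma norm_sq_ri (z : ℂ) : ‖z‖ ^ 2 = z.re ^ 2 + z.im ^ 2 := by
  rw [Complex.sq_norm, Complex.normSq_apply]; ring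

lemma norm_ge (u α : ℂ) (hu : ‖u‖ = 1) (h : ‖α‖ / 2 ≤ (u * α).re) :
    ‖α‖ + 1 / 2 ≤ ‖u * α + 1‖ := by
  have hn : ‖u * α‖ = ‖α‖ := by rw [norm_mul, hu, one_mul]
  have h1 : ‖u * α + 1‖ ^ 2 = ‖α‖ ^ 2 + 2 * (u * α).re + 1 := by
    rw [← hn, norm_sq_ri, norm_sq_ri]
    simp only [Complex.add_re, Complex.add_im, Complex.one_re, Complex.one_im]
    ring
  have h2 : (‖α‖ + 1 / 2) ^ 2 ≤ ‖u * α + 1‖ ^ 2 := by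
    rw [h1]; nlinarith [norm_nonneg α]
  nlinarith [norm_nonneg (u * α + 1), norm_nonneg α]

/-- target direction for increasing the real part of `u * α`. -/
lemma exists_target (α : ℂ) : ∃ t : Circle, ∀ u : ℂ, ‖u‖ = 1 → ‖u - t‖ < 1 / 2 →
    ‖α‖ / 2 ≤ (u * α).re := by
  rcases eq_or_ne α 0 with rfl | hα
  · exact ⟨1, fun u _ _ => by simp⟩
  · have hne : (‖α‖ : ℂ) ≠ 0 := by exact_mod_cast norm_ne_zero_iff.mpr hα
    refine ⟨⟨(starRingEnd ℂ) α / ‖α‖, mem_sphere_zero_iff_norm.2 ?_⟩, fun u hu hd => ?_⟩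
    · rw [norm_div, RCLike.norm_conj]
      rw [Complex.norm_real, Real.norm_eq_abs, abs_norm]
      exact div_self (norm_ne_zero_iff.mpr hα)
    · set t : ℂ := (starRingEnd ℂ) α / ‖α‖ with ht
      have h2 : ((starRingEnd ℂ) α) * α = ((‖α‖ ^ 2 : ℝ) : ℂ) := by
        rw [mul_comm, Complex.mul_conj]
        norm_cast
        rw [Complex.normSq_eq_norm_sq]
      have hta : t * α = (‖α‖ : ℂ) := by
        rw [ht, div_mul_eq_mul_div, h2, sq]
        push_cast
        rw [mul_div_assoc, div_self hne, mul_one]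
      have hsplit : u * α = t * α + (u - t) * α := by ring
      have habs : |((u - t) * α).re| ≤ ‖(u - t) * α‖ := by
        exact Complex.abs_re_le_norm _
      have hnm : ‖(u - t) * α‖ = ‖u - t‖ * ‖α‖ := norm_mul _ _
      have hre : (u * α).re = ‖α‖ + ((u - t) * α).re := by
        rw [hsplit, Complex.add_re, hta, Complex.ofReal_re]
      rw [hre]
      have hd' : ‖u - t‖ < 1 / 2 := hd
      have h3 : -(‖u - t‖ * ‖α‖) ≤ ((u - t) * α).re := by
        rw [← hnm]; exact neg_le_of_abs_le habs
      nlinarith [norm_nonneg α, norm_nonneg (u - t)]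

lemma powA (z : ℂ) (n : ℕ) :
    (!![z, z - 1; (0:ℂ), 1]) ^ n = !![z ^ n, z ^ n - 1; 0, 1] := by
  induction n with
  | zero => simp [Matrix.one_fin_two]
  | succ n ih =>
      rw [pow_succ, ih, Matrix.mul_fin_two]
      congr 1 <;> ring_nf

lemma powB (z : ℂ) (n : ℕ) :
    (!![z, (0:ℂ); 0, 1]) ^ n = !![z ^ n, 0; 0, 1] := by
  induction n with
  | zero => simp [Matrix.one_fin_two]
  | succ n ih =>
      rw [pow_succ, ih, Matrix.mul_fin_two]
      ext i j
      fin_cases i <;> fin_cases j <;> simp [pow_succ]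

lemma entry (zφ zψ α : ℂ) (n m : ℕ) :
    ((!![zφ, zφ - 1; (0:ℂ), 1] ^ n * !![zψ, 0; 0, 1] ^ m).mulVec ![α, 1]) 0
      = zφ ^ n * (zψ ^ m * α + 1) - 1 := by
  rw [powA, powB, Matrix.mul_fin_two]
  simp [Matrix.mulVec, dotProduct, Fin.sum_univ_two]
  ring



end Stmt13Aux

open Complex in
/-- the escape step. If neither e^{iφ} nor e^{iψ} is a root of unity
then there is a uniform M such that for every α the modulus of the first
coordinate can be increased by at least 1 using A₁ⁿA₂^m with 1 ≤ n, m ≤ M. -/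
theorem stmt13 (φ ψ : ℝ)
    (hφ : ∀ k : ℕ, 0 < k → exp (φ * I) ^ k ≠ 1)
    (hψ : ∀ k : ℕ, 0 < k → exp (ψ * I) ^ k ≠ 1) :
    ∃ M : ℕ, 1 ≤ M ∧ ∀ α : ℂ, ∃ n m : ℕ, 1 ≤ n ∧ n ≤ M ∧ 1 ≤ m ∧ m ≤ M ∧
      ‖α‖ + 1 ≤
        ‖((!![exp (φ * I), exp (φ * I) - 1; 0, 1] ^ n *
            !![exp (ψ * I), 0; 0, 1] ^ m).mulVec ![α, 1]) 0‖ := by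
  have hcirc : ∀ (θ : ℝ), (∀ k : ℕ, 0 < k → exp (θ * I) ^ k ≠ 1) →
      ∀ k : ℕ, 0 < k → Circle.exp θ ^ k ≠ 1 := by
    intro θ hθ k hk h1
    apply hθ k hk
    have h2 : ((Circle.exp θ ^ k : Circle) : ℂ) = 1 := by rw [h1, Circle.coe_one]
    rwa [Stmt13Aux.coe_pow, Circle.coe_exp] at h2
  obtain ⟨Mφ, hMφ1, hMφ⟩ := Stmt13Aux.uniform φ (hcirc φ hφ) (by norm_num : (0:ℝ) < 1/2)
  obtain ⟨Mψ, hMψ1, hMψ⟩ := Stmt13Aux.uniform ψ (hcirc ψ hψ) (by norm_num : (0:ℝ) < 1/2)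
  refine ⟨max Mφ Mψ, le_trans hMφ1 (le_max_left _ _), fun α => ?_⟩
  -- step 1 : choose m
  obtain ⟨t, htprop⟩ := Stmt13Aux.exists_target α
  obtain ⟨m, hm1, hm2, hmd⟩ := hMψ t
  set u : ℂ := ((Circle.exp ψ ^ m : Circle) : ℂ) with hu
  have hunorm : ‖u‖ = 1 := by
    rw [hu]; exact mem_sphere_zero_iff_norm.mp (Circle.exp ψ ^ m).2
  have hud : ‖u - (t : ℂ)‖ < 1 / 2 := by
    have : dist t (Circle.exp ψ ^ m) = ‖(t : ℂ) - u‖ := by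
      exact dist_eq_norm (t : ℂ) u
    rw [norm_sub_rev, ← this]
    exact hmd
  have hre1 : ‖α‖ / 2 ≤ (u * α).re := htprop u hunorm hud
  set β : ℂ := u * α + 1 with hβdef
  have hβ : ‖α‖ + 1 / 2 ≤ ‖β‖ := Stmt13Aux.norm_ge u α hunorm hre1
  -- step 2 : choose n
  obtain ⟨t', ht'prop⟩ := Stmt13Aux.exists_target (-β)
  obtain ⟨n, hn1, hn2, hnd⟩ := hMφ t'
  set v : ℂ := ((Circle.exp φ ^ n : Circle) : ℂ) with hv
  have hvnorm : ‖v‖ = 1 := by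
    rw [hv]; exact mem_sphere_zero_iff_norm.mp (Circle.exp φ ^ n).2
  have hvd : ‖v - (t' : ℂ)‖ < 1 / 2 := by
    have : dist t' (Circle.exp φ ^ n) = ‖(t' : ℂ) - v‖ := by
      exact dist_eq_norm (t' : ℂ) v
    rw [norm_sub_rev, ← this]
    exact hnd
  have hre2 : ‖-β‖ / 2 ≤ (v * -β).re := ht'prop v hvnorm hvd
  have hre2' : ‖β‖ / 2 ≤ ((-v) * β).re := by
    rw [show (-v) * β = v * -β by ring, ← norm_neg β]; exact hre2
  have hfinal : ‖β‖ + 1 / 2 ≤ ‖v * β - 1‖ := by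
    have := Stmt13Aux.norm_ge (-v) β (by rw [norm_neg]; exact hvnorm) hre2'
    rwa [show (-v) * β + 1 = -(v * β - 1) by ring, norm_neg] at this
  refine ⟨n, m, hn1, le_trans hn2 (le_max_left _ _), hm1, le_trans hm2 (le_max_right _ _), ?_⟩
  have hent := Stmt13Aux.entry (exp (φ * I)) (exp (ψ * I)) α n m
  rw [hent]
  have hvval : v = exp (φ * I) ^ n := by rw [hv, Stmt13Aux.coe_pow, Circle.coe_exp]
  have huval : u = exp (ψ * I) ^ m := by rw [hu, Stmt13Aux.coe_pow, Circle.coe_exp]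
  rw [← hvval, ← huval, ← hβdef]
  linarith
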